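/- Let G'=(V',E') be a connected undirected multigraph without self-loops, let W ⊆ V' with |W| even, and let B ⊆ E' be an edge set such that |B ∩ δ(S)| ≥ 2 for every nonempty S ⊊ V'. Then there exists a W-join J ⊆ E' with |J| ≤ |B|/2. -/

import Mathlib

/-!
W-join bound: in a connected multigraph `G' = (V', E')` without self-loops, if
`W ⊆ V'` has even cardinality and `B ⊆ E'` crosses every nonempty proper cut at least
twice, then there is a `W`-join `J` with `|J| ≤ |B|/2` (stated as `2|J| ≤ |B|`).
-/

/-- The set of edges of `F` having exactly one endpoint in `S`, i.e. `F ∩ δ(S)`. -/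
def cutEdges {V E : Type*} [DecidableEq V] (ends : E → V × V) (F : Finset E)
    (S : Finset V) : Finset E :=
  F.filter fun e => ¬(((ends e).1 ∈ S) ↔ ((ends e).2 ∈ S))

/-- The degree of `v` in the subgraph with edge set `J` (no self-loops assumed). -/
def degIn {V E : Type*} [DecidableEq V] (ends : E → V × V) (J : Finset E) (v : V) : ℕ :=
  (J.filter fun e => (ends e).1 = v ∨ (ends e).2 = v).card

namespace Stmt17

open scoped symmDiff

variable {V' E' : Type*} [DecidableEq V'] [DecidableEq E']

lemma degIn_empty (ends : E' → V' × V') (v : V') : degIn ends ∅ v = 0 := by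
  simp [degIn]

lemma degIn_union (ends : E' → V' × V') {J K : Finset E'} (h : Disjoint J K) (v : V') :
    degIn ends (J ∪ K) v = degIn ends J v + degIn ends K v := by
  unfold degIn
  rw [Finset.filter_union, Finset.card_union_of_disjoint
    (h.mono (Finset.filter_subset _ _) (Finset.filter_subset _ _))]

lemma degIn_insert (ends : E' → V' × V') {J : Finset E'} {e : E'} (he : e ∉ J)
    (hl : (ends e).1 ≠ (ends e).2) (v : V') :
    degIn ends (insert e J) v
      = degIn ends J v + ((if v = (ends e).1 then 1 else 0)
          + (if v = (ends e).2 then 1 else 0)) := by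
  unfold degIn
  rw [Finset.filter_insert]
  by_cases h : (ends e).1 = v ∨ (ends e).2 = v
  · rw [if_pos h, Finset.card_insert_of_notMem (fun hc => he (Finset.mem_filter.mp hc).1)]
    rcases h with h | h
    · rw [if_pos h.symm, if_neg (fun h2 => hl (h.trans h2))]
    · rw [if_neg (fun h1 => hl (h1.symm.trans h.symm)), if_pos h.symm]
  · push_neg at h
    rw [if_neg (by tauto), if_neg (fun h1 => h.1 h1.symm), if_neg (fun h2 => h.2 h2.symm)]
    omega

lemma card_symmDiff_parity (s t : Finset V') :
    (s ∆ t).card + 2 * (s ∩ t).card = s.card + t.card := by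
  rw [symmDiff_def, Finset.sup_eq_union]
  rw [Finset.card_union_of_disjoint disjoint_sdiff_sdiff]
  have h1 := Finset.card_sdiff_add_card_inter s t
  have h2 := Finset.card_sdiff_add_card_inter t s
  rw [Finset.inter_comm] at h2
  omega

lemma even_card_symmDiff_iff (s t : Finset V') :
    Even ((s ∆ t).card) ↔ Even (s.card + t.card) := by
  have := card_symmDiff_parity s t
  rw [Nat.even_iff, Nat.even_iff]
  omega

/-- A walk from `x` to `y` with edge list `es` and (post-`x`) vertex list `vs`. -/
inductive Walk (ends : E' → V' × V') : V' → V' → List E' → List V' → Prop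
  | nil (x : V') : Walk ends x x [] []
  | cons {x w y : V'} {e : E'} {es : List E'} {vs : List V'}
      (he : ends e = (x, w) ∨ ends e = (w, x))
      (hw : Walk ends w y es vs) : Walk ends x y (e :: es) (w :: vs)

lemma walk_nil_vs {ends : E' → V' × V'} {a b : V'} {es : List E'}
    (h : Walk ends a b es []) : a = b := by
  cases h; rfl

lemma walk_concat {ends : E' → V' × V'} {x y : V'} {es : List E'} {vs : List V'}
    (h : Walk ends x y es vs) : vs = [] ∨ ∃ vs₀, vs = vs₀ ++ [y] := by
  induction h with
  | nil => exact Or.inl rfl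
  | @cons x w y e es vs he hw ih =>
    right
    rcases ih with h0 | ⟨vs₀, h0⟩
    · subst h0
      have := walk_nil_vs hw
      subst this
      exact ⟨[], rfl⟩
    · subst h0
      exact ⟨w :: vs₀, rfl⟩

lemma walk_snoc {ends : E' → V' × V'} {x y c : V'} {es : List E'} {vs : List V'} {e : E'}
    (h : Walk ends x y es vs) (he : ends e = (y, c) ∨ ends e = (c, y)) :
    Walk ends x c (es ++ [e]) (vs ++ [c]) := by
  induction h with
  | nil x => exact Walk.cons he (Walk.nil c)
  | cons he' hw ih => exact Walk.cons he' (ih he)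

lemma walk_edge_mem {ends : E' → V' × V'} {x y : V'} {es : List E'} {vs : List V'}
    (h : Walk ends x y es vs) : ∀ e ∈ es, (ends e).1 ∈ x :: vs ∧ (ends e).2 ∈ x :: vs := by
  induction h with
  | nil => intro e he; simp at he
  | @cons x w y e es vs he hw ih =>
    intro f hf
    rcases List.mem_cons.mp hf with rfl | hf
    · rcases he with he | he <;> rw [he] <;> simp
    · have := ih f hf
      constructor
      · exact List.mem_cons_of_mem _ this.1
      · exact List.mem_cons_of_mem _ this.2

lemma walk_edges_nodup {ends : E' → V' × V'} {x y : V'} {es : List E'} {vs : List V'}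
    (h : Walk ends x y es vs) (hnd : (x :: vs).Nodup) : es.Nodup := by
  induction h with
  | nil => exact List.nodup_nil
  | @cons x w y e es vs he hw ih =>
    rw [List.nodup_cons] at hnd
    rw [List.nodup_cons]
    refine ⟨?_, ih hnd.2⟩
    intro hmem
    have hx : x ∈ w :: vs := by
      have := walk_edge_mem hw e hmem
      rcases he with he | he
      · rw [he] at this; exact this.1
      · rw [he] at this; exact this.2
    exact hnd.1 hx

lemma walk_suffix {ends : E' → V' × V'} {a y : V'} {es : List E'} {vs : List V'}
    (h : Walk ends a y es vs) : ∀ x, x ∈ a :: vs →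
    ∃ es₂ vs₂, Walk ends x y es₂ vs₂ ∧ (∀ e ∈ es₂, e ∈ es) ∧
      (x :: vs₂).Sublist (a :: vs) := by
  induction h with
  | nil a =>
    intro x hx
    simp at hx
    subst hx
    exact ⟨[], [], Walk.nil x, by simp, List.Sublist.refl _⟩
  | @cons a w y e es vs he hw ih =>
    intro x hx
    rcases List.mem_cons.mp hx with rfl | hx
    · exact ⟨e :: es, w :: vs, Walk.cons he hw, fun _ h => h, List.Sublist.refl _⟩
    · obtain ⟨es₂, vs₂, hwalk, hsub, hsl⟩ := ih x hx
      exact ⟨es₂, vs₂, hwalk, fun f hf => List.mem_cons_of_mem _ (hsub f hf),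
        hsl.trans (List.sublist_cons_self _ _)⟩

lemma walk_dedup {ends : E' → V' × V'} {x y : V'} {es : List E'} {vs : List V'}
    (h : Walk ends x y es vs) :
    ∃ es' vs', Walk ends x y es' vs' ∧ (∀ e ∈ es', e ∈ es) ∧ (x :: vs').Nodup := by
  induction h with
  | nil x => exact ⟨[], [], Walk.nil x, by simp, by simp⟩
  | @cons x w y e es vs he hw ih =>
    obtain ⟨es₁, vs₁, hw1, hsub1, hnd1⟩ := ih
    by_cases hx : x ∈ w :: vs₁
    · obtain ⟨es₂, vs₂, hw2, hsub2, hsl⟩ := walk_suffix hw1 x hx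
      exact ⟨es₂, vs₂, hw2, fun f hf => List.mem_cons_of_mem _ (hsub1 f (hsub2 f hf)),
        hsl.nodup hnd1⟩
    · refine ⟨e :: es₁, w :: vs₁, Walk.cons he hw1, ?_, ?_⟩
      · intro f hf
        rcases List.mem_cons.mp hf with rfl | hf
        · exact List.mem_cons_self
        · exact List.mem_cons_of_mem _ (hsub1 f hf)
      · exact List.nodup_cons.mpr ⟨hx, hnd1⟩

/-- `EarBuilt U B`: the multigraph `(U, B)` can be built from a single vertex by
successively adding ears (walks between existing `U`-vertices, with new edges). -/
inductive EarBuilt (ends : E' → V' × V') : Finset V' → Finset E' → Prop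
  | base (v : V') : EarBuilt ends {v} ∅
  | ear {U : Finset V'} {B : Finset E'} {x y : V'} {es : List E'} {vs : List V'}
      (hU : EarBuilt ends U B) (hx : x ∈ U) (hy : y ∈ U)
      (hw : Walk ends x y es vs) (hnd : es.Nodup) (hfresh : ∀ e ∈ es, e ∉ B) :
      EarBuilt ends (U ∪ vs.toFinset) (B ∪ es.toFinset)

lemma earBuilt_nonempty {ends : E' → V' × V'} {U : Finset V'} {B : Finset E'}
    (h : EarBuilt ends U B) : U.Nonempty := by
  induction h with
  | base v => exact ⟨v, Finset.mem_singleton_self v⟩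
  | ear _ _ _ _ _ _ ih => exact ih.mono Finset.subset_union_left

lemma earBuilt_ends_mem {ends : E' → V' × V'} {U : Finset V'} {B : Finset E'}
    (h : EarBuilt ends U B) : ∀ e ∈ B, (ends e).1 ∈ U ∧ (ends e).2 ∈ U := by
  induction h with
  | base v => intro e he; simp at he
  | @ear U B x y es vs hU hx hy hw hnd hfresh ih =>
    intro e he
    rcases Finset.mem_union.mp he with he | he
    · exact ⟨Finset.mem_union_left _ (ih e he).1, Finset.mem_union_left _ (ih e he).2⟩
    · have hmem := walk_edge_mem hw e (List.mem_toFinset.mp he)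
      constructor
      · rcases List.mem_cons.mp hmem.1 with h1 | h1
        · exact Finset.mem_union_left _ (h1 ▸ hx)
        · exact Finset.mem_union_right _ (List.mem_toFinset.mpr h1)
      · rcases List.mem_cons.mp hmem.2 with h1 | h1
        · exact Finset.mem_union_left _ (h1 ▸ hx)
        · exact Finset.mem_union_right _ (List.mem_toFinset.mpr h1)

/-- The two alternating classes along a path, with their degree parities. -/
lemma pathClasses (ends : E' → V' × V') (hloop : ∀ e : E', (ends e).1 ≠ (ends e).2)
    {x y : V'} {es : List E'} {vs : List V'} (hw : Walk ends x y es vs) :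
    ∀ S : Finset V', es.Nodup → (∀ v ∈ S, v ∈ vs.dropLast) → y ∉ S →
    ∃ J0 J1 : Finset E', J0 ∪ J1 = es.toFinset ∧ Disjoint J0 J1 ∧
      (∀ v, Odd (degIn ends J0 v) ↔
        Odd ((if v ∈ S then 1 else 0) + (if v = x then 1 else 0) +
          (if v = y then (if Even S.card then 1 else 0) else 0))) ∧
      (∀ v, Odd (degIn ends J1 v) ↔
        Odd ((if v ∈ S then 1 else 0) +
          (if v = y then (if Even S.card then 0 else 1) else 0))) := by
  induction hw with
  | nil x =>
    intro S hnd hS hy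
    have hSempty : S = ∅ := by
      refine Finset.eq_empty_of_forall_notMem (fun v hv => ?_)
      simpa using hS v hv
    subst hSempty
    refine ⟨∅, ∅, by simp, by simp, ?_, ?_⟩ <;> intro v <;>
      by_cases hvx : v = x <;>
      simp [degIn_empty, Nat.odd_iff, hvx]
  | @cons x w y e es vs he hw ih =>
    intro S hnd hS hy
    have henotin : e ∉ es := (List.nodup_cons.mp hnd).1
    have hndtail : es.Nodup := (List.nodup_cons.mp hnd).2
    have hSsub' : ∀ v ∈ S, v ≠ w → v ∈ vs.dropLast := by
      intro v hv hvw
      have hmem := hS v hv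
      cases vs with
      | nil => simp at hmem
      | cons a l =>
        have : (w :: a :: l).dropLast = w :: (a :: l).dropLast := rfl
        rw [this] at hmem
        rcases List.mem_cons.mp hmem with h1 | h1
        · exact absurd h1 hvw
        · exact h1
    have hee : ∀ v : V', ((if v = (ends e).1 then 1 else 0) + (if v = (ends e).2 then 1 else 0))
        = ((if v = x then 1 else 0) + (if v = w then (1:ℕ) else 0)) := by
      intro v
      rcases he with he | he <;> rw [he] <;> simp <;> omega
    by_cases hwS : w ∈ S
    · -- mark at w: swap classes
      obtain ⟨J0, J1, hun, hdis, h0, h1⟩ := ih (S.erase w) hndtail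
        (fun v hv => hSsub' v (Finset.mem_of_mem_erase hv) (Finset.ne_of_mem_erase hv))
        (fun hc => hy (Finset.mem_of_mem_erase hc))
      have hcard : S.card = (S.erase w).card + 1 := (Finset.card_erase_add_one hwS).symm
      have heJ1 : e ∉ J1 := fun hc => henotin (List.mem_toFinset.mp (hun ▸ Finset.mem_union_right _ hc))
      have heJ0 : e ∉ J0 := fun hc => henotin (List.mem_toFinset.mp (hun ▸ Finset.mem_union_left _ hc))
      refine ⟨insert e J1, J0, ?_, ?_, ?_, ?_⟩
      · rw [Finset.insert_union, Finset.union_comm, hun, List.toFinset_cons]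
      · rw [Finset.disjoint_insert_left]
        exact ⟨heJ0, hdis.symm⟩
      · intro v
        rw [degIn_insert ends heJ1 (hloop e), hee v]
        have hv := h1 v
        have hpar : (Even (S.erase w).card) ↔ ¬ Even S.card := by
          rw [hcard, Nat.even_add_one, not_not]
        simp only [Nat.odd_iff] at hv ⊢
        by_cases hvw : v = w
        · subst hvw
          have hwy : v ≠ y := fun h => hy (h ▸ hwS)
          simp only [if_pos hwS, if_neg (Finset.notMem_erase v S), if_neg hwy, hpar]
            at hv ⊢
          split_ifs at hv ⊢ <;> (try simp only [iff_false, iff_true] at hv ⊢) <;> omega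
        · have hmE : v ∈ S.erase w ↔ v ∈ S := by
            rw [Finset.mem_erase]; tauto
          simp only [hmE, hpar, if_neg hvw] at hv ⊢
          split_ifs at hv ⊢ <;> (try simp only [iff_false, iff_true] at hv ⊢) <;> omega
      · intro v
        have hv := h0 v
        have hpar : (Even (S.erase w).card) ↔ ¬ Even S.card := by
          rw [hcard, Nat.even_add_one, not_not]
        simp only [Nat.odd_iff] at hv ⊢
        by_cases hvw : v = w
        · subst hvw
          have hwy : v ≠ y := fun h => hy (h ▸ hwS)
          simp only [if_pos hwS, if_neg (Finset.notMem_erase v S), if_neg hwy, hpar,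
            if_pos rfl] at hv ⊢
          split_ifs at hv ⊢ <;> (try simp only [iff_false, iff_true] at hv ⊢) <;> omega
        · have hmE : v ∈ S.erase w ↔ v ∈ S := by
            rw [Finset.mem_erase]; tauto
          simp only [hmE, hpar, if_neg hvw] at hv ⊢
          split_ifs at hv ⊢ <;> (try simp only [iff_false, iff_true] at hv ⊢) <;> omega
    · -- no mark at w: keep classes
      have hSsub'' : ∀ v ∈ S, v ∈ vs.dropLast := fun v hv =>
        hSsub' v hv (fun h => hwS (h ▸ hv))
      obtain ⟨J0, J1, hun, hdis, h0, h1⟩ := ih S hndtail hSsub'' hy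
      have heJ1 : e ∉ J1 := fun hc => henotin (List.mem_toFinset.mp (hun ▸ Finset.mem_union_right _ hc))
      have heJ0 : e ∉ J0 := fun hc => henotin (List.mem_toFinset.mp (hun ▸ Finset.mem_union_left _ hc))
      refine ⟨insert e J0, J1, ?_, ?_, ?_, ?_⟩
      · rw [Finset.insert_union, hun, List.toFinset_cons]
      · rw [Finset.disjoint_insert_left]
        exact ⟨heJ1, hdis⟩
      · intro v
        rw [degIn_insert ends heJ0 (hloop e), hee v]
        have hv := h0 v
        simp only [Nat.odd_iff] at hv ⊢
        by_cases hvw : v = w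
        · subst hvw
          simp only [if_neg hwS, if_pos rfl] at hv ⊢
          split_ifs at hv ⊢ <;> (try simp only [iff_false, iff_true] at hv ⊢) <;> omega
        · simp only [if_neg hvw] at hv ⊢
          split_ifs at hv ⊢ <;> (try simp only [iff_false, iff_true] at hv ⊢) <;> omega
      · intro v
        exact h1 v

/-- Soundness: an ear-built graph has small joins for all even demand sets. -/
lemma earBuilt_sound (ends : E' → V' × V') (hloop : ∀ e : E', (ends e).1 ≠ (ends e).2)
    {U : Finset V'} {B : Finset E'} (h : EarBuilt ends U B) :
    ∀ W : Finset V', W ⊆ U → Even W.card →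
      ∃ J : Finset E', J ⊆ B ∧ (∀ v, v ∈ W ↔ Odd (degIn ends J v)) ∧ 2 * J.card ≤ B.card := by
  induction h with
  | base v =>
    intro W hWU hWe
    have hWempty : W = ∅ := by
      rcases Finset.subset_singleton_iff.mp hWU with h | h
      · exact h
      · rw [h] at hWe; simp at hWe
    subst hWempty
    exact ⟨∅, Finset.empty_subset _, fun v => by simp [degIn_empty, Nat.odd_iff],
      by simp⟩
  | @ear U B x y es vs hU hx hy hw hnd hfresh ih =>
    intro W hWU hWe
    classical
    set S : Finset V' := W \ U with hSdef
    have hSU : ∀ v ∈ S, v ∉ U := fun v hv => (Finset.mem_sdiff.mp hv).2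
    have hSW : S ⊆ W := Finset.sdiff_subset
    have hSsub : ∀ v ∈ S, v ∈ vs.dropLast := by
      intro v hv
      have hvU := (Finset.mem_sdiff.mp hv).2
      have hvW := (Finset.mem_sdiff.mp hv).1
      have hvvs : v ∈ vs := by
        rcases Finset.mem_union.mp (hWU hvW) with h1 | h1
        · exact absurd h1 hvU
        · exact List.mem_toFinset.mp h1
      have hvy : v ≠ y := fun h => hvU (h ▸ hy)
      rcases walk_concat hw with h1 | ⟨vs₀, h1⟩
      · rw [h1] at hvvs; simp at hvvs
      · rw [h1, List.dropLast_concat]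
        rw [h1] at hvvs
        rcases List.mem_append.mp hvvs with h2 | h2
        · exact h2
        · simp at h2; exact absurd h2 hvy
    have hyS : y ∉ S := fun hc => (hSU y hc) hy
    obtain ⟨J0, J1, hun, hdis, h0, h1⟩ := pathClasses ends hloop hw S hnd hSsub hyS
    have hcard01 : J0.card + J1.card = es.toFinset.card := by
      rw [← Finset.card_union_of_disjoint hdis, hun]
    -- the odd sets of the two classes
    set D0 : Finset V' := {x} ∆ (if Even S.card then {y} else ∅) with hD0def
    set D1 : Finset V' := (if Even S.card then (∅ : Finset V') else {y}) with hD1def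
    have hD0sub : ∀ v ∈ D0, v = x ∨ v = y := by
      intro v hv
      rw [hD0def, Finset.mem_symmDiff] at hv
      split_ifs at hv <;> simp at hv <;> tauto
    have hD1sub : ∀ v ∈ D1, v = x ∨ v = y := by
      intro v hv
      rw [hD1def] at hv
      split_ifs at hv <;> simp at hv <;> tauto
    have hT0 : ∀ v, Odd (degIn ends J0 v) ↔ v ∈ S ∆ D0 := by
      intro v
      rw [h0 v, hD0def]
      by_cases hev : Even S.card <;>
        simp only [hev, if_true, if_false] <;>
        simp only [Finset.mem_symmDiff, Finset.mem_singleton, Finset.notMem_empty,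
          Nat.odd_iff] <;>
        split_ifs <;> simp_all <;> omega
    have hT1 : ∀ v, Odd (degIn ends J1 v) ↔ v ∈ S ∆ D1 := by
      intro v
      rw [h1 v, hD1def]
      by_cases hev : Even S.card <;>
        simp only [hev, if_true, if_false] <;>
        simp only [Finset.mem_symmDiff, Finset.mem_singleton, Finset.notMem_empty,
          Nat.odd_iff] <;>
        split_ifs <;> simp_all <;> omega
    have hD0even : Even (S.card + D0.card) := by
      rw [hD0def]
      by_cases hev : Even S.card
      · rw [if_pos hev]
        have : Even (({x} ∆ ({y} : Finset V')).card) := by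
          rw [even_card_symmDiff_iff]
          simp
        rcases hev with ⟨a, ha⟩
        rcases this with ⟨b, hb⟩
        exact ⟨a + b, by omega⟩
      · rw [if_neg hev, ← Finset.bot_eq_empty, symmDiff_bot]
        simp only [Finset.card_singleton]
        rw [Nat.even_add_one]
        exact hev
    have hD1even : Even (S.card + D1.card) := by
      rw [hD1def]
      by_cases hev : Even S.card
      · rw [if_pos hev]; simpa using hev
      · rw [if_neg hev]
        simp only [Finset.card_singleton]
        rw [Nat.even_add_one]
        exact hev
    -- generic finishing step given a chosen class
    have key : ∀ (Jc : Finset E') (Dc : Finset V'), Jc ⊆ es.toFinset →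
        (∀ v ∈ Dc, v = x ∨ v = y) → Even (S.card + Dc.card) →
        (∀ v, Odd (degIn ends Jc v) ↔ v ∈ S ∆ Dc) → 2 * Jc.card ≤ es.toFinset.card →
        ∃ J : Finset E', J ⊆ B ∪ es.toFinset ∧
          (∀ v, v ∈ W ↔ Odd (degIn ends J v)) ∧ 2 * J.card ≤ (B ∪ es.toFinset).card := by
      intro Jc Dc hJes hDc hTeven hTc hJsize
      set T : Finset V' := S ∆ Dc with hTdef
      have hST : S ⊆ T := by
        intro v hv
        rw [hTdef, Finset.mem_symmDiff]
        left
        refine ⟨hv, fun hc => ?_⟩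
        rcases hDc v hc with rfl | rfl
        · exact hSU _ hv hx
        · exact hSU _ hv hy
      have hTsub : ∀ v ∈ T, v ∈ S ∨ v = x ∨ v = y := by
        intro v hv
        rw [hTdef, Finset.mem_symmDiff] at hv
        rcases hv with ⟨h1, _⟩ | ⟨h1, _⟩
        · exact Or.inl h1
        · exact Or.inr (hDc v h1)
      have hTeven' : Even T.card := by
        rw [hTdef, even_card_symmDiff_iff]
        exact hTeven
      set W2 : Finset V' := W ∆ T with hW2def
      have hW2U : W2 ⊆ U := by
        intro v hv
        rw [hW2def, Finset.mem_symmDiff] at hv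
        by_contra hvU
        rcases hv with ⟨h1, h2⟩ | ⟨h1, h2⟩
        · exact h2 (hST (Finset.mem_sdiff.mpr ⟨h1, hvU⟩))
        · rcases hTsub v h1 with h3 | h3 | h3
          · exact h2 (hSW h3)
          · exact hvU (h3 ▸ hx)
          · exact hvU (h3 ▸ hy)
      have hW2even : Even W2.card := by
        rw [hW2def, even_card_symmDiff_iff]
        rcases hWe with ⟨a, ha⟩
        rcases hTeven' with ⟨b, hb⟩
        exact ⟨a + b, by omega⟩
      obtain ⟨J', hJ'B, hJ'join, hJ'card⟩ := ih W2 hW2U hW2even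
      have hdisBes : Disjoint B es.toFinset := by
        rw [Finset.disjoint_right]
        intro a ha
        exact hfresh a (List.mem_toFinset.mp ha)
      have hdisJ : Disjoint J' Jc :=
        hdisBes.mono hJ'B hJes
      refine ⟨J' ∪ Jc, Finset.union_subset_union hJ'B hJes, ?_, ?_⟩
      · intro v
        rw [degIn_union ends hdisJ]
        have hWmem : v ∈ W ↔ ¬ (v ∈ W2 ↔ v ∈ T) := by
          have hcancel : W2 ∆ T = W := by
            rw [hW2def]
            exact symmDiff_symmDiff_cancel_right T W
          rw [← hcancel, Finset.mem_symmDiff]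
          tauto
        rw [hWmem]
        have hv1 := hJ'join v
        have hv2 := hTc v
        rw [hv1, ← hv2]
        simp only [Nat.odd_iff]
        omega
      · rw [Finset.card_union_of_disjoint hdisJ, Finset.card_union_of_disjoint hdisBes]
        omega
    rcases le_total J0.card J1.card with hle | hle
    · exact key J0 D0 (hun ▸ Finset.subset_union_left) hD0sub hD0even hT0 (by omega)
    · exact key J1 D1 (hun ▸ Finset.subset_union_right) hD1sub hD1even hT1 (by omega)

lemma rtg_walk {ends : E' → V' × V'} {Pe : E' → Prop} {Step : V' → V' → Prop}
    (hS : ∀ p q, Step p q → ∃ e, Pe e ∧ (ends e = (p, q) ∨ ends e = (q, p)))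
    {a b : V'} (h : Relation.ReflTransGen Step a b) :
    ∃ es vs, Walk ends a b es vs ∧ ∀ e ∈ es, Pe e := by
  induction h with
  | refl => exact ⟨[], [], Walk.nil a, by simp⟩
  | @tail b c hab hbc ih =>
    obtain ⟨es, vs, hwalk, hPe⟩ := ih
    obtain ⟨e, hPee, he⟩ := hS _ _ hbc
    refine ⟨es ++ [e], vs ++ [c], walk_snoc hwalk he, ?_⟩
    intro f hf
    rcases List.mem_append.mp hf with hf | hf
    · exact hPe f hf
    · simp at hf; exact hf ▸ hPee

lemma earBuilt_univ [Fintype V'] (ends : E' → V' × V') (B : Finset E')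
    (hB : ∀ S : Finset V', S.Nonempty → S ≠ Finset.univ →
      2 ≤ (cutEdges ends B S).card)
    (v0 : V') : EarBuilt ends Finset.univ B := by
  classical
  suffices h : ∀ n (U : Finset V') (C : Finset E'), EarBuilt ends U C → C ⊆ B →
      (Finset.univ \ U).card + (B \ C).card ≤ n → EarBuilt ends Finset.univ B by
    exact h ((Finset.univ \ ({v0} : Finset V')).card + B.card) {v0} ∅ (.base v0)
      (Finset.empty_subset B) (by simp)
  intro n
  induction n with
  | zero =>
    intro U C hUC hCB hm
    have hU : U = Finset.univ := by
      have h1 : (Finset.univ \ U) = ∅ := Finset.card_eq_zero.mp (by omega)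
      have h2 : (Finset.univ : Finset V') ⊆ U := by
        intro a ha
        by_contra hc
        have : a ∈ Finset.univ \ U := Finset.mem_sdiff.mpr ⟨ha, hc⟩
        rw [h1] at this; simp at this
      exact Finset.eq_univ_iff_forall.mpr (fun a => h2 (Finset.mem_univ a))
    have hC : C = B := by
      have h1 : (B \ C) = ∅ := Finset.card_eq_zero.mp (by omega)
      refine Finset.Subset.antisymm hCB (fun a ha => ?_)
      by_contra hc
      have : a ∈ B \ C := Finset.mem_sdiff.mpr ⟨ha, hc⟩
      rw [h1] at this; simp at this
    rw [← hU, ← hC]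
    exact hUC
  | succ n ih =>
    intro U C hUC hCB hm
    by_cases hUuniv : U = Finset.univ
    · by_cases hCeq : C = B
      · rw [← hUuniv, ← hCeq]; exact hUC
      · -- add a single-edge ear
        obtain ⟨f, hf⟩ : (B \ C).Nonempty :=
          Finset.sdiff_nonempty.mpr (fun h => hCeq (Finset.Subset.antisymm hCB h))
        have hfB : f ∈ B := (Finset.mem_sdiff.mp hf).1
        have hfC : f ∉ C := (Finset.mem_sdiff.mp hf).2
        have hear : EarBuilt ends (U ∪ ([(ends f).2] : List V').toFinset)
            (C ∪ ([f] : List E').toFinset) := by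
          refine EarBuilt.ear hUC (x := (ends f).1) (y := (ends f).2)
            (hUuniv ▸ Finset.mem_univ _) (hUuniv ▸ Finset.mem_univ _)
            (Walk.cons (Or.inl Prod.mk.eta.symm) (Walk.nil _)) (by simp) ?_
          intro e he
          simp at he
          exact he ▸ hfC
        refine ih _ _ hear ?_ ?_
        · refine Finset.union_subset hCB ?_
          intro e he
          simp at he
          exact he ▸ hfB
        · have hd1 : (Finset.univ \ (U ∪ ([(ends f).2] : List V').toFinset)).card
              ≤ (Finset.univ \ U).card :=
            Finset.card_le_card (Finset.sdiff_subset_sdiff (le_refl _)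
              Finset.subset_union_left)
          have hd2 : (B \ (C ∪ ([f] : List E').toFinset)).card < (B \ C).card := by
            apply Finset.card_lt_card
            constructor
            · exact Finset.sdiff_subset_sdiff (le_refl _) Finset.subset_union_left
            · intro hsub
              have : f ∈ B \ (C ∪ ([f] : List E').toFinset) := hsub hf
              simp at this
          omega
    · -- U is a proper nonempty subset : find a crossing edge and an ear back to U
      have hUne : U.Nonempty := earBuilt_nonempty hUC
      have hcut := hB U hUne hUuniv
      obtain ⟨f, hfcut⟩ : (cutEdges ends B U).Nonempty :=
        Finset.card_pos.mp (by omega)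
      have hfB : f ∈ B := (Finset.mem_filter.mp hfcut).1
      have hfcross : ¬(((ends f).1 ∈ U) ↔ ((ends f).2 ∈ U)) := (Finset.mem_filter.mp hfcut).2
      obtain ⟨xx, zz, hxU, hzU, hor⟩ :
          ∃ a b, a ∈ U ∧ b ∉ U ∧ (ends f = (a, b) ∨ ends f = (b, a)) := by
        by_cases h1 : (ends f).1 ∈ U
        · exact ⟨(ends f).1, (ends f).2, h1, by tauto, Or.inl Prod.mk.eta.symm⟩
        · exact ⟨(ends f).2, (ends f).1, by tauto, h1, Or.inr Prod.mk.eta.symm⟩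
      have hfC : f ∉ C := by
        intro hc
        have hmem := earBuilt_ends_mem hUC f hc
        rcases hor with h1 | h1
        · rw [h1] at hmem; exact hzU hmem.2
        · rw [h1] at hmem; exact hzU hmem.1
      set Step : V' → V' → Prop := fun p q => p ∉ U ∧
        ∃ e, e ∈ B ∧ e ≠ f ∧ (ends e = (p, q) ∨ ends e = (q, p)) with hStepDef
      have hreach : ∃ u ∈ U, Relation.ReflTransGen Step zz u := by
        by_contra hno
        push_neg at hno
        set R : Finset V' := Finset.univ.filter (fun v => Relation.ReflTransGen Step zz v)
          with hRdef
        have hzR : zz ∈ R := by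
          rw [hRdef]; exact Finset.mem_filter.mpr ⟨Finset.mem_univ _, Relation.ReflTransGen.refl⟩
        have hRU : ∀ u ∈ U, u ∉ R := by
          intro u hu hr
          exact hno u hu ((Finset.mem_filter.mp hr).2)
        have hRne : R.Nonempty := ⟨zz, hzR⟩
        have hRuniv : R ≠ Finset.univ := by
          intro hR
          obtain ⟨u, hu⟩ := hUne
          exact hRU u hu (hR ▸ Finset.mem_univ u)
        have h2 := hB R hRne hRuniv
        obtain ⟨g, hgcut, hgf⟩ : ∃ g ∈ cutEdges ends B R, g ≠ f :=
          Finset.exists_mem_ne (by omega) f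
        have hgB : g ∈ B := (Finset.mem_filter.mp hgcut).1
        have hgcross : ¬(((ends g).1 ∈ R) ↔ ((ends g).2 ∈ R)) := (Finset.mem_filter.mp hgcut).2
        obtain ⟨p, q, hpR, hqR, hor2⟩ :
            ∃ p q, p ∈ R ∧ q ∉ R ∧ (ends g = (p, q) ∨ ends g = (q, p)) := by
          by_cases h1 : (ends g).1 ∈ R
          · exact ⟨(ends g).1, (ends g).2, h1, by tauto, Or.inl Prod.mk.eta.symm⟩
          · exact ⟨(ends g).2, (ends g).1, by tauto, h1, Or.inr Prod.mk.eta.symm⟩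
        have hpU : p ∉ U := fun h => hRU p h hpR
        have hstep : Step p q := ⟨hpU, g, hgB, hgf, hor2⟩
        have hq : Relation.ReflTransGen Step zz q :=
          Relation.ReflTransGen.tail ((Finset.mem_filter.mp hpR).2) hstep
        exact hqR (Finset.mem_filter.mpr ⟨Finset.mem_univ _, hq⟩)
      obtain ⟨u, huU, hrtg⟩ := hreach
      obtain ⟨es0, vs0, hwalk0, hPe0⟩ := rtg_walk
        (Pe := fun e => e ∈ B ∧ e ≠ f ∧ ((ends e).1 ∉ U ∨ (ends e).2 ∉ U))
        (fun p q hpq => by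
          obtain ⟨hpU, e, heB, hef, hor'⟩ := hpq
          refine ⟨e, ⟨heB, hef, ?_⟩, hor'⟩
          rcases hor' with h1 | h1 <;> rw [h1] <;> tauto) hrtg
      obtain ⟨es1, vs1, hwalk1, hsub1, hnd1⟩ := walk_dedup hwalk0
      have hPe1 : ∀ e ∈ es1, e ∈ B ∧ e ≠ f ∧ ((ends e).1 ∉ U ∨ (ends e).2 ∉ U) :=
        fun e he => hPe0 e (hsub1 e he)
      have hndes1 : es1.Nodup := walk_edges_nodup hwalk1 hnd1
      have hear : EarBuilt ends (U ∪ (zz :: vs1).toFinset) (C ∪ (f :: es1).toFinset) := by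
        refine EarBuilt.ear hUC (x := xx) (y := u) hxU huU
          (Walk.cons hor hwalk1) ?_ ?_
        · exact List.nodup_cons.mpr ⟨fun hc => (hPe1 f hc).2.1 rfl, hndes1⟩
        · intro e he
          rcases List.mem_cons.mp he with rfl | he
          · exact hfC
          · intro hc
            have hmem := earBuilt_ends_mem hUC e hc
            rcases (hPe1 e he).2.2 with h1 | h1
            · exact h1 hmem.1
            · exact h1 hmem.2
      refine ih _ _ hear ?_ ?_
      · refine Finset.union_subset hCB ?_
        intro e he
        rcases List.mem_cons.mp (List.mem_toFinset.mp he) with rfl | he'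
        · exact hfB
        · exact (hPe1 e he').1
      · have hd1 : (Finset.univ \ (U ∪ (zz :: vs1).toFinset)).card
            ≤ (Finset.univ \ U).card :=
          Finset.card_le_card (Finset.sdiff_subset_sdiff (le_refl _)
            Finset.subset_union_left)
        have hd2 : (B \ (C ∪ (f :: es1).toFinset)).card < (B \ C).card := by
          apply Finset.card_lt_card
          constructor
          · exact Finset.sdiff_subset_sdiff (le_refl _) Finset.subset_union_left
          · intro hsub
            have hfBC : f ∈ B \ C := Finset.mem_sdiff.mpr ⟨hfB, hfC⟩
            have : f ∈ B \ (C ∪ (f :: es1).toFinset) := hsub hfBC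
            simp at this
        omega

end Stmt17

theorem stmt17 {V' E' : Type*} [Fintype V'] [DecidableEq V'] [Fintype E'] [DecidableEq E']
    (ends : E' → V' × V') (hloop : ∀ e : E', (ends e).1 ≠ (ends e).2)
    (hconn : ∀ S : Finset V', S.Nonempty → S ≠ Finset.univ →
      (cutEdges ends Finset.univ S).Nonempty)
    (W : Finset V') (hW : Even W.card)
    (B : Finset E')
    (hB : ∀ S : Finset V', S.Nonempty → S ≠ Finset.univ →
      2 ≤ (cutEdges ends B S).card) :
    ∃ J : Finset E',
      (∀ v : V', v ∈ W ↔ Odd (degIn ends J v)) ∧ 2 * J.card ≤ B.card := by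
  classical
  cases isEmpty_or_nonempty V' with
  | inl h =>
    exact ⟨∅, fun v => (h.false v).elim, by simp⟩
  | inr h =>
    obtain ⟨v0⟩ := h
    have hb := Stmt17.earBuilt_univ ends B hB v0
    obtain ⟨J, _, hj, hc⟩ := Stmt17.earBuilt_sound ends hloop hb W (Finset.subset_univ W) hW
    exact ⟨J, hj, hc⟩
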